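/- Let n ≥ 2 and let S_n(Sym_n) be the monoid presented by generators x_1,…,x_n and relations x_{σ(1)}x_{σ(2)}⋯x_{σ(n)} = x_1x_2⋯x_n for all σ ∈ Sym_n. Then for every m ≥ 1 and all indices i_1,…,i_m with 2 ≤ i_1,…,i_m ≤ n, the identity x_ε·x_{i_1}x_{i_2}⋯x_{i_m}·x_1 = x_1·x_ε·x_{i_1}x_{i_2}⋯x_{i_m} holds in S_n(Sym_n), where x_ε = x_1x_2⋯x_n. -/

import Mathlib

/-- The word `x_{σ(1)} x_{σ(2)} ⋯ x_{σ(n)}` in the free monoid on `n` generators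
(generator `x_j` is indexed by `j-1 : Fin n`). -/
def permWord {n : ℕ} (σ : Equiv.Perm (Fin n)) : FreeMonoid (Fin n) :=
  FreeMonoid.ofList (List.ofFn fun i => σ i)

/-- The word `x_ε = x_1 x_2 ⋯ x_n`. -/
def epsWord (n : ℕ) : FreeMonoid (Fin n) :=
  FreeMonoid.ofList (List.ofFn fun i : Fin n => i)

/-- The defining relations `x_{σ(1)} ⋯ x_{σ(n)} = x_1 ⋯ x_n`, `σ ∈ Sym_n`. -/
def symRel (n : ℕ) : FreeMonoid (Fin n) → FreeMonoid (Fin n) → Prop :=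
  fun a b => ∃ σ : Equiv.Perm (Fin n), a = permWord σ ∧ b = epsWord n

/-- The canonical projection from the free monoid onto `S_n(Sym_n)`. -/
def proj (n : ℕ) : FreeMonoid (Fin n) →* PresentedMonoid (symRel n) :=
  PresentedMonoid.mk (symRel n)

/-- `u` contains a subword of the form `x_{σ(1)} ⋯ x_{σ(n)}` for some `σ ∈ Sym_n`. -/
def HasPermSubword {n : ℕ} (u : FreeMonoid (Fin n)) : Prop :=
  ∃ (σ : Equiv.Perm (Fin n)) (a b : FreeMonoid (Fin n)), u = a * permWord σ * b

/-- The word `x_1^{m_1} · x_ε · x_2^{m_2} ⋯ x_n^{m_n}` (0-indexed: `m i` is the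
exponent of generator `i`). -/
def normalWord (n : ℕ) (h : 0 < n) (m : Fin n → ℕ) : FreeMonoid (Fin n) :=
  FreeMonoid.ofList (List.replicate (m ⟨0, h⟩) ⟨0, h⟩) * epsWord n *
    FreeMonoid.ofList (((List.finRange n).drop 1).flatMap fun i => List.replicate (m i) i)

/- ### Auxiliary lemmas -/

private theorem aux_ofFn_cast {α : Type*} (L : List α) (n : ℕ) (h : L.length = n) :
    List.ofFn (fun k : Fin n => L.get (Fin.cast h.symm k)) = L := by
  subst h; simp [List.ofFn_get]

private theorem aux_append {n : ℕ} (a b : List (Fin n)) :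
    proj n (FreeMonoid.ofList (a ++ b)) =
      proj n (FreeMonoid.ofList a) * proj n (FreeMonoid.ofList b) := by
  rw [← map_mul]; rfl

private theorem aux_cons {n : ℕ} (x : Fin n) (L : List (Fin n)) :
    proj n (FreeMonoid.ofList (x :: L)) =
      proj n (FreeMonoid.of x) * proj n (FreeMonoid.ofList L) := by
  rw [show x :: L = [x] ++ L from rfl, aux_append]; rfl

/-- Any word enumerating all the generators exactly once equals `x_ε` in `S_n(Sym_n)`. -/
private theorem aux_key (n : ℕ) (L : List (Fin n)) (h : L.Perm (List.finRange n)) :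
    proj n (FreeMonoid.ofList L) = proj n (epsWord n) := by
  have hlen : L.length = n := by simpa using h.length_eq
  have hnd : L.Nodup := h.nodup_iff.mpr (List.nodup_finRange n)
  have hinj : Function.Injective (fun k : Fin n => L.get (Fin.cast hlen.symm k)) := by
    intro a b hab
    have := (List.nodup_iff_injective_get.mp hnd) hab
    simpa using this
  have hbij := Finite.injective_iff_bijective.mp hinj
  have hword : permWord (Equiv.ofBijective _ hbij) = FreeMonoid.ofList L := by
    unfold permWord
    congr 1
    exact aux_ofFn_cast L n hlen
  have hrel : symRel n (permWord (Equiv.ofBijective _ hbij)) (epsWord n) := ⟨_, rfl, rfl⟩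
  rw [← hword]
  exact Quotient.sound (ConGen.Rel.of _ _ hrel)

/-- `x_ε` commutes with every generator. -/
private theorem aux_central (n : ℕ) (i : Fin n) :
    proj n (epsWord n) * proj n (FreeMonoid.of i) =
      proj n (FreeMonoid.of i) * proj n (epsWord n) := by
  set E : List (Fin n) := (List.finRange n).erase i with hE
  have hmem : i ∈ List.finRange n := List.mem_finRange i
  have hperm2 : (i :: E).Perm (List.finRange n) := (List.perm_cons_erase hmem).symm
  have hperm1 : (E ++ [i]).Perm (List.finRange n) :=
    (List.perm_append_singleton i E).trans hperm2
  calc proj n (epsWord n) * proj n (FreeMonoid.of i)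
      = proj n (FreeMonoid.ofList (E ++ [i])) * proj n (FreeMonoid.of i) := by
        rw [aux_key n _ hperm1]
    _ = proj n (FreeMonoid.ofList (i :: E)) * proj n (FreeMonoid.of i) := by
        rw [aux_key n _ hperm1, aux_key n _ hperm2]
    _ = proj n (FreeMonoid.of i) * (proj n (FreeMonoid.ofList E) * proj n (FreeMonoid.of i)) := by
        rw [aux_cons, mul_assoc]
    _ = proj n (FreeMonoid.of i) * proj n (FreeMonoid.ofList (E ++ [i])) := by
        rw [aux_append]; rfl
    _ = proj n (FreeMonoid.of i) * proj n (epsWord n) := by rw [aux_key n _ hperm1]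

/-- Adjacent letters immediately after `x_ε` may be swapped. -/
private theorem aux_swap (n : ℕ) (i j : Fin n) :
    proj n (epsWord n) * proj n (FreeMonoid.of i) * proj n (FreeMonoid.of j) =
      proj n (epsWord n) * proj n (FreeMonoid.of j) * proj n (FreeMonoid.of i) := by
  rcases eq_or_ne i j with rfl | hij
  · rfl
  set Q : List (Fin n) := ((List.finRange n).erase j).erase i with hQ
  have hmemj : j ∈ List.finRange n := List.mem_finRange j
  have hmemi : i ∈ (List.finRange n).erase j :=
    (List.mem_erase_of_ne hij).mpr (List.mem_finRange i)
  have hL1 : (j :: i :: Q).Perm (List.finRange n) :=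
    (((List.perm_cons_erase hmemi).symm).cons j).trans (List.perm_cons_erase hmemj).symm
  have hM1 : (Q ++ [i, j]).Perm (List.finRange n) :=
    (List.perm_append_comm).trans ((List.Perm.swap j i Q).trans hL1)
  have hM2 : (Q ++ [j, i]).Perm (List.finRange n) :=
    (List.Perm.append_left Q (List.Perm.swap i j [])).trans hM1
  have expand : ∀ a b : Fin n,
      proj n (FreeMonoid.ofList (j :: i :: Q)) * proj n (FreeMonoid.of a) *
          proj n (FreeMonoid.of b) =
        proj n (FreeMonoid.of j) * proj n (FreeMonoid.of i) *
          proj n (FreeMonoid.ofList (Q ++ [a, b])) := by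
    intro a b
    rw [aux_cons, aux_cons, aux_append, aux_cons, aux_cons]
    rw [show proj n (FreeMonoid.ofList ([] : List (Fin n))) = 1 from rfl]
    rw [mul_one]
    rw [mul_assoc, mul_assoc, mul_assoc, mul_assoc]
  calc proj n (epsWord n) * proj n (FreeMonoid.of i) * proj n (FreeMonoid.of j)
      = proj n (FreeMonoid.ofList (j :: i :: Q)) * proj n (FreeMonoid.of i) *
          proj n (FreeMonoid.of j) := by rw [aux_key n _ hL1]
    _ = proj n (FreeMonoid.of j) * proj n (FreeMonoid.of i) *
          proj n (FreeMonoid.ofList (Q ++ [i, j])) := expand i j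
    _ = proj n (FreeMonoid.of j) * proj n (FreeMonoid.of i) *
          proj n (FreeMonoid.ofList (Q ++ [j, i])) := by
        rw [aux_key n _ hM1, aux_key n _ hM2]
    _ = proj n (FreeMonoid.ofList (j :: i :: Q)) * proj n (FreeMonoid.of j) *
          proj n (FreeMonoid.of i) := (expand j i).symm
    _ = proj n (epsWord n) * proj n (FreeMonoid.of j) * proj n (FreeMonoid.of i) := by
        rw [aux_key n _ hL1]

/-- Multiplication by `x_ε` on the left makes a word depend only on its multiset of letters. -/
private theorem aux_perm_inv (n : ℕ) {u v : List (Fin n)} (h : u.Perm v) :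
    proj n (epsWord n) * proj n (FreeMonoid.ofList u) =
      proj n (epsWord n) * proj n (FreeMonoid.ofList v) := by
  induction h with
  | nil => rfl
  | cons x h ih =>
      rw [aux_cons, aux_cons, ← mul_assoc, ← mul_assoc, aux_central, mul_assoc, mul_assoc, ih]
  | swap x y l =>
      rw [aux_cons, aux_cons, aux_cons, aux_cons, ← mul_assoc, ← mul_assoc, ← mul_assoc,
        ← mul_assoc, aux_swap]
  | trans h1 h2 ih1 ih2 => exact ih1.trans ih2

/-- For `m ≥ 1` indices `i_1, …, i_m` with `2 ≤ i_t ≤ n` (0-indexed: values ≠ 0),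
`x_ε · x_{i_1} ⋯ x_{i_m} · x_1 = x_1 · x_ε · x_{i_1} ⋯ x_{i_m}` holds in `S_n(Sym_n)`. -/
theorem eps_mul_x1_comm (n : ℕ) (hn : 2 ≤ n) (l : List (Fin n))
    (hlen : 1 ≤ l.length) (hl : ∀ a ∈ l, a.val ≠ 0) :
    proj n (epsWord n) * proj n (FreeMonoid.ofList l) *
        proj n (FreeMonoid.of (⟨0, by omega⟩ : Fin n)) =
      proj n (FreeMonoid.of (⟨0, by omega⟩ : Fin n)) * proj n (epsWord n) *
        proj n (FreeMonoid.ofList l) := by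
  set z : Fin n := ⟨0, by omega⟩
  have hperm : (l ++ [z]).Perm (z :: l) := List.perm_append_singleton z l
  calc proj n (epsWord n) * proj n (FreeMonoid.ofList l) * proj n (FreeMonoid.of z)
      = proj n (epsWord n) * proj n (FreeMonoid.ofList (l ++ [z])) := by
        rw [aux_append, ← mul_assoc]; rfl
    _ = proj n (epsWord n) * proj n (FreeMonoid.ofList (z :: l)) := aux_perm_inv n hperm
    _ = proj n (epsWord n) * proj n (FreeMonoid.of z) * proj n (FreeMonoid.ofList l) := by
        rw [aux_cons, ← mul_assoc]
    _ = proj n (FreeMonoid.of z) * proj n (epsWord n) * proj n (FreeMonoid.ofList l) := by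
        rw [aux_central]
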